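/- Let d > 0 and a > 0, and let F : ℂ → ℂ be analytic on an open set containing the closed unit disk. Then there exists a constant C > 0 such that for every t ≥ 1: |∫₀^a F( exp( i·d·s^{−1/2} ) )·e^{i·s·t} ds| ≤ C·t^{−5/6}. -/

import Mathlib

open Complex MeasureTheory intervalIntegral Set

lemma nexp (x : ℝ) : ‖Complex.exp (I * (x : ℂ))‖ = 1 := by
  rw [Complex.norm_exp]
  simp

lemma iiexp {φ : ℝ → ℝ} (hφ : Measurable φ) (α β : ℝ) :
    IntervalIntegrable (fun s => Complex.exp (I * (φ s : ℂ))) volume α β := by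
  have hm : Measurable fun s => Complex.exp (I * (φ s : ℂ)) := by
    exact (Complex.measurable_exp.comp ((measurable_const.mul
      (Complex.measurable_ofReal.comp hφ))))
  have : IsFiniteMeasure (volume.restrict (Set.uIoc α β)) := by
    constructor
    rw [Measure.restrict_apply_univ, Set.uIoc]
    exact (Real.volume_Ioc ..).trans_lt ENNReal.ofReal_lt_top
  rw [intervalIntegrable_iff]
  refine (integrable_const (1:ℝ)).mono' hm.aestronglyMeasurable ?_
  filter_upwards with s
  rw [nexp]

lemma trivbd {φ : ℝ → ℝ} (α β : ℝ) (h : α ≤ β) :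
    ‖∫ s in α..β, Complex.exp (I * (φ s : ℂ))‖ ≤ β - α := by
  have := intervalIntegral.norm_integral_le_of_norm_le_const (C := 1)
    (f := fun s => Complex.exp (I * (φ s : ℂ))) (a := α) (b := β)
    (fun x _ => le_of_eq (nexp _))
  rwa [one_mul, _root_.abs_of_nonneg (by linarith : (0:ℝ) ≤ β - α)] at this

lemma vdc (φ φ' φ'' : ℝ → ℝ) (α β lam : ℝ) (hab : α ≤ β) (hlam : 0 < lam)
    (hφm : Measurable φ)
    (hd1 : ∀ s ∈ Icc α β, HasDerivAt φ (φ' s) s)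
    (hd2 : ∀ s ∈ Icc α β, HasDerivAt φ' (φ'' s) s)
    (hc : ContinuousOn φ'' (Icc α β))
    (h2 : ∀ s ∈ Icc α β, 0 ≤ φ'' s)
    (hsgn : (∀ s ∈ Icc α β, lam ≤ φ' s) ∨ (∀ s ∈ Icc α β, φ' s ≤ -lam)) :
    ‖∫ s in α..β, Complex.exp (I * (φ s : ℂ))‖ ≤ 3 / lam := by
  have hne : ∀ s ∈ Icc α β, φ' s ≠ 0 := by
    intro s hs
    rcases hsgn with h | h
    · exact ne_of_gt (lt_of_lt_of_le hlam (h s hs))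
    · exact ne_of_lt (lt_of_le_of_lt (h s hs) (by linarith))
  have habs : ∀ s ∈ Icc α β, lam ≤ |φ' s| := by
    intro s hs
    rcases hsgn with h | h
    · exact le_trans (h s hs) (le_abs_self _)
    · refine le_trans ?_ (neg_le_abs _); linarith [h s hs]
  have hc1 : ContinuousOn φ' (Icc α β) := fun s hs => ((hd2 s hs).continuousAt).continuousWithinAt
  have hc0 : ContinuousOn φ (Icc α β) := fun s hs => ((hd1 s hs).continuousAt).continuousWithinAt
  have huIcc : Set.uIcc α β = Icc α β := Set.uIcc_of_le hab
  -- the function h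
  set h : ℝ → ℂ := fun s => Complex.exp (I * (φ s : ℂ)) * (-I * (((φ' s)⁻¹ : ℝ) : ℂ)) with hh
  have hder : ∀ s ∈ Icc α β, HasDerivAt h
      (Complex.exp (I * (φ s : ℂ)) * (1 + I * ((φ'' s / (φ' s)^2 : ℝ) : ℂ))) s := by
    intro s hs
    have h1 : HasDerivAt (fun u => Complex.exp (I * (φ u : ℂ)))
        (Complex.exp (I * (φ s : ℂ)) * (I * (φ' s : ℂ))) s := by
      have hphi : HasDerivAt (fun u => I * (φ u : ℂ)) (I * (φ' s : ℂ)) s :=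
        (((hd1 s hs).ofReal_comp).const_mul I)
      exact hphi.cexp
    have hr : HasDerivAt (fun u => (φ' u)⁻¹) (-(φ'' s)/(φ' s)^2) s :=
      (hd2 s hs).inv (hne s hs)
    have h2' : HasDerivAt (fun u => -I * (((φ' u)⁻¹ : ℝ) : ℂ))
        (-I * ((-(φ'' s)/(φ' s)^2 : ℝ) : ℂ)) s :=
      (hr.ofReal_comp).const_mul (-I)
    have := h1.mul h2'
    refine this.congr_deriv ?_
    have hne' : (φ' s : ℂ) ≠ 0 := Complex.ofReal_ne_zero.mpr (hne s hs)
    have hne' : (φ' s : ℂ) ≠ 0 := Complex.ofReal_ne_zero.mpr (hne s hs)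
    push_cast
    field_simp
    ring_nf
    simp [Complex.I_sq]
  have hint1 : IntervalIntegrable (fun s => Complex.exp (I * (φ s : ℂ))) volume α β :=
    iiexp hφm α β
  have hint2 : IntervalIntegrable
      (fun s => Complex.exp (I * (φ s : ℂ)) * (I * ((φ'' s / (φ' s)^2 : ℝ) : ℂ))) volume α β := by
    apply ContinuousOn.intervalIntegrable
    rw [huIcc]
    refine ContinuousOn.mul ?_ ?_
    · exact Complex.continuous_exp.comp_continuousOn
        (continuousOn_const.mul (Complex.continuous_ofReal.comp_continuousOn hc0))
    · exact continuousOn_const.mul (Complex.continuous_ofReal.comp_continuousOn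
        (hc.div (hc1.pow 2) (fun s hs => pow_ne_zero 2 (hne s hs))))
  set g : ℝ → ℂ := fun s => Complex.exp (I * (φ s : ℂ)) * (I * ((φ'' s / (φ' s)^2 : ℝ) : ℂ)) with hg
  have key : ∫ s in α..β, Complex.exp (I * (φ s : ℂ)) =
      (h β - h α) - ∫ s in α..β, g s := by
    have hft : (∫ s in α..β, (Complex.exp (I * (φ s : ℂ)) + g s)) = h β - h α := by
      apply intervalIntegral.integral_eq_sub_of_hasDerivAt
      · intro s hs
        rw [huIcc] at hs
        have := hder s hs
        refine this.congr_deriv ?_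
        simp only [hg]
        ring
      · exact hint1.add hint2
    rw [intervalIntegral.integral_add hint1 hint2] at hft
    rw [← hft]; ring
  rw [key]
  have hbd : ∀ x ∈ Icc α β, ‖h x‖ ≤ 1/lam := by
    intro x hx
    rw [hh]
    simp only [norm_mul, nexp, one_mul, norm_neg, Complex.norm_I, Complex.norm_real,
      Real.norm_eq_abs, abs_inv]
    rw [one_div]
    exact inv_anti₀ hlam (habs x hx)
  have hbd3 : ‖∫ s in α..β, g s‖ ≤ 1/lam := by
    have hnorm : ‖∫ s in α..β, g s‖ ≤ ∫ s in α..β, φ'' s / (φ' s)^2 := by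
      refine le_trans (intervalIntegral.norm_integral_le_integral_norm hab) ?_
      refine le_of_eq (intervalIntegral.integral_congr ?_)
      intro x hx
      rw [huIcc] at hx
      simp only [hg, norm_mul, nexp, one_mul, Complex.norm_I, Complex.norm_real,
        Real.norm_eq_abs]
      rw [_root_.abs_of_nonneg (div_nonneg (h2 x hx) (sq_nonneg _))]
    have hftc : (∫ s in α..β, φ'' s / (φ' s)^2) = (-(φ' β)⁻¹) - (-(φ' α)⁻¹) := by
      apply intervalIntegral.integral_eq_sub_of_hasDerivAt
      · intro s hs
        rw [huIcc] at hs
        have := ((hd2 s hs).inv (hne s hs)).neg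
        refine this.congr_deriv ?_
        ring
      · apply ContinuousOn.intervalIntegrable
        rw [huIcc]
        exact hc.div (hc1.pow 2) (fun s hs => pow_ne_zero 2 (hne s hs))
    refine hnorm.trans ?_
    rw [hftc]
    rcases hsgn with hp | hp
    · have h1 : (φ' α)⁻¹ ≤ 1/lam := by
        rw [one_div]
        exact inv_anti₀ hlam (hp α ⟨le_refl _, hab⟩)
      have h2' : 0 < (φ' β)⁻¹ :=
        inv_pos.mpr (lt_of_lt_of_le hlam (hp β ⟨hab, le_refl _⟩))
      linarith
    · have h1 : (φ' α)⁻¹ < 0 :=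
        inv_neg''.mpr (lt_of_le_of_lt (hp α ⟨le_refl _, hab⟩) (by linarith))
      have h2' : -(φ' β)⁻¹ ≤ 1/lam := by
        rw [← inv_neg, one_div]
        exact inv_anti₀ hlam (by linarith [hp β ⟨hab, le_refl _⟩])
      linarith
  calc ‖(h β - h α) - ∫ s in α..β, g s‖ ≤ ‖h β‖ + ‖h α‖ + ‖∫ s in α..β, g s‖ := by
        refine le_trans (norm_sub_le _ _) ?_
        gcongr
        exact norm_sub_le _ _
    _ ≤ 1/lam + 1/lam + 1/lam := by
        have b1 := hbd β ⟨hab, le_refl _⟩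
        have b2 := hbd α ⟨le_refl _, hab⟩
        linarith [hbd3]
    _ = 3/lam := by ring
noncomputable def ph (t c s : ℝ) : ℝ := s * t + c * s ^ (-(1:ℝ)/2)
noncomputable def ph' (t c s : ℝ) : ℝ := t + c * (-(1:ℝ)/2) * s ^ (-(3:ℝ)/2)
noncomputable def ph'' (t c s : ℝ) : ℝ := c * ((3:ℝ)/4) * s ^ (-(5:ℝ)/2)

lemma meas_ph (t c : ℝ) : Measurable (ph t c) := by
  unfold ph; measurability

lemma hasDerivAt_ph (t c : ℝ) {s : ℝ} (hs : 0 < s) : HasDerivAt (ph t c) (ph' t c s) s := by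
  unfold ph ph'
  have h1 : HasDerivAt (fun u : ℝ => u * t) (1 * t) s := (hasDerivAt_id s).mul_const t
  have h2 : HasDerivAt (fun u : ℝ => u ^ (-(1:ℝ)/2)) ((-(1:ℝ)/2) * s ^ ((-(1:ℝ)/2) - 1)) s :=
    Real.hasDerivAt_rpow_const (Or.inl hs.ne')
  have := h1.add (h2.const_mul c)
  refine this.congr_deriv ?_
  rw [show (-(1:ℝ)/2 - 1) = -(3:ℝ)/2 by norm_num]
  ring

lemma hasDerivAt_ph' (t c : ℝ) {s : ℝ} (hs : 0 < s) : HasDerivAt (ph' t c) (ph'' t c s) s := by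
  unfold ph' ph''
  have h2 : HasDerivAt (fun u : ℝ => u ^ (-(3:ℝ)/2)) ((-(3:ℝ)/2) * s ^ ((-(3:ℝ)/2) - 1)) s :=
    Real.hasDerivAt_rpow_const (Or.inl hs.ne')
  have := (h2.const_mul (c * (-(1:ℝ)/2))).const_add t
  refine this.congr_deriv ?_
  rw [show (-(3:ℝ)/2 - 1) = -(5:ℝ)/2 by norm_num]
  ring

lemma cont_ph'' (t c α β : ℝ) (hα : 0 < α) : ContinuousOn (ph'' t c) (Icc α β) := by
  unfold ph''
  refine continuousOn_const.mul ?_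
  intro s hs
  exact (Real.continuousAt_rpow_const s _
    (Or.inl (ne_of_gt (lt_of_lt_of_le hα hs.1)))).continuousWithinAt

lemma nonneg_ph'' (t c : ℝ) (hc : 0 ≤ c) {s : ℝ} (hs : 0 ≤ s) : 0 ≤ ph'' t c s := by
  unfold ph''
  have : 0 ≤ s ^ (-(5:ℝ)/2) := Real.rpow_nonneg hs _
  positivity
set_option maxHeartbeats 2000000 in
lemma core (a c : ℝ) (ha : 0 < a) (hc : 0 ≤ c) (t : ℝ) (ht : 1 ≤ t) :
    ‖∫ s in (0:ℝ)..a, Complex.exp (I * (ph t c s : ℂ))‖ ≤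
      12 * (1 + c) * t ^ (-(5:ℝ)/6) := by
  have tpos : (0:ℝ) < t := lt_of_lt_of_le one_pos ht
  set ε : ℝ := t ^ (-(5:ℝ)/6) with hεdef
  have hεpos : 0 < ε := Real.rpow_pos_of_pos tpos _
  have h1c : (0:ℝ) < 1 + c := by linarith
  set L : ℝ := (1 + c) * ε with hLdef
  have hLpos : 0 < L := by positivity
  set s0 : ℝ := (c / (2 * t)) ^ ((2:ℝ)/3) with hs0def
  have hs0 : 0 ≤ s0 := Real.rpow_nonneg (by positivity) _
  -- fact B : s0 ^ (3/2) = c / (2*t)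
  have factB : s0 ^ ((3:ℝ)/2) = c / (2 * t) := by
    rw [hs0def, ← Real.rpow_mul (by positivity)]
    norm_num
  -- fact A : s0 ≤ (1+c) * t ^ (-2/3)
  have factA : s0 ≤ (1 + c) * t ^ (-(2:ℝ)/3) := by
    have hb : c / (2 * t) ≤ (1 + c) ^ ((3:ℝ)/2) / t := by
      have h32 : (1 + c) ≤ (1 + c) ^ ((3:ℝ)/2) := by
        calc (1 + c) = (1 + c) ^ (1:ℝ) := (Real.rpow_one _).symm
          _ ≤ _ := Real.rpow_le_rpow_of_exponent_le (by linarith) (by norm_num)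
      rw [div_le_div_iff₀ (by positivity) tpos]
      nlinarith
    calc s0 ≤ ((1 + c) ^ ((3:ℝ)/2) / t) ^ ((2:ℝ)/3) := by
          rw [hs0def]
          exact Real.rpow_le_rpow (by positivity) hb (by norm_num)
      _ = (1 + c) * t ^ (-(2:ℝ)/3) := by
          rw [div_eq_mul_inv, Real.mul_rpow (by positivity) (by positivity),
            ← Real.rpow_mul (by positivity), ← Real.rpow_neg_one t,
            ← Real.rpow_mul tpos.le]
          norm_num
  -- fact D : (1+c) * t^(-2/3) = t * L * ε
  have factD : (1 + c) * t ^ (-(2:ℝ)/3) = t * L * ε := by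
    rw [hLdef, hεdef]
    have : t * ((1 + c) * t ^ (-(5:ℝ)/6)) * t ^ (-(5:ℝ)/6)
        = (1 + c) * (t ^ (1:ℝ) * t ^ (-(5:ℝ)/6) * t ^ (-(5:ℝ)/6)) := by
      rw [Real.rpow_one]; ring
    rw [this, ← Real.rpow_add tpos, ← Real.rpow_add tpos]
    norm_num
  have factAD : s0 ≤ t * L * ε := factD ▸ factA
  -- ph' formula
  have hps : ∀ s : ℝ, 0 < s → ph' t c s = t - t * (s0 / s) ^ ((3:ℝ)/2) := by
    intro s hs
    have h1 : (s0 / s) ^ ((3:ℝ)/2) = s0 ^ ((3:ℝ)/2) / s ^ ((3:ℝ)/2) :=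
      Real.div_rpow hs0 hs.le _
    have h2 : s ^ (-(3:ℝ)/2) = (s ^ ((3:ℝ)/2))⁻¹ := by
      rw [show (-(3:ℝ)/2) = -((3:ℝ)/2) by norm_num, Real.rpow_neg hs.le]
    have hsne : s ^ ((3:ℝ)/2) ≠ 0 := ne_of_gt (Real.rpow_pos_of_pos hs _)
    unfold ph'
    rw [h1, factB, h2]
    field_simp
    ring
  -- interval integrability
  have II : ∀ x y : ℝ, IntervalIntegrable
      (fun s => Complex.exp (I * (ph t c s : ℂ))) volume x y :=
    fun x y => iiexp (meas_ph t c) x y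
  rcases le_or_gt a ε with hcase0 | hcase0
  · -- trivial : whole integral ≤ a ≤ ε
    refine (trivbd 0 a ha.le).trans ?_
    have : (1:ℝ) ≤ 12 * (1 + c) := by nlinarith
    nlinarith [hεpos]
  -- main case : ε < a
  set p : ℝ := min a (max ε (s0 - L)) with hpdef
  set q : ℝ := min a (max p (s0 + L)) with hqdef
  have hεa : ε ≤ a := hcase0.le
  have hεp : ε ≤ p := le_min hεa (le_max_left _ _)
  have hpq : p ≤ q := le_min (min_le_left _ _) (le_max_left _ _)
  have hqa : q ≤ a := min_le_left _ _
  have hppos : 0 < p := lt_of_lt_of_le hεpos hεp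
  have hqpos : 0 < q := lt_of_lt_of_le hppos hpq
  have split : (∫ s in (0:ℝ)..a, Complex.exp (I * (ph t c s : ℂ)))
      = (∫ s in (0:ℝ)..ε, Complex.exp (I * (ph t c s : ℂ)))
      + (∫ s in ε..p, Complex.exp (I * (ph t c s : ℂ)))
      + (∫ s in p..q, Complex.exp (I * (ph t c s : ℂ)))
      + (∫ s in q..a, Complex.exp (I * (ph t c s : ℂ))) := by
    have e1 := intervalIntegral.integral_add_adjacent_intervals (II 0 ε) (II ε p)
    have e2 := intervalIntegral.integral_add_adjacent_intervals (II 0 p) (II p q)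
    have e3 := intervalIntegral.integral_add_adjacent_intervals (II 0 q) (II q a)
    rw [← e3, ← e2, ← e1]
  have bd1 : ‖∫ s in (0:ℝ)..ε, Complex.exp (I * (ph t c s : ℂ))‖ ≤ ε := by
    have := trivbd (φ := ph t c) 0 ε hεpos.le
    simpa using this
  have bd2 : ‖∫ s in ε..p, Complex.exp (I * (ph t c s : ℂ))‖ ≤ 3 * ε := by
    rcases le_or_gt (s0 - L) ε with hcase | hcase
    · have hpε : p = ε := by
        rw [hpdef, max_eq_left hcase, min_eq_right hεa]
      rw [hpε, intervalIntegral.integral_same]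
      simpa using by positivity
    · have hs0pos : 0 < s0 := by linarith
      have hple : p ≤ s0 - L := by
        rw [hpdef, max_eq_right hcase.le]
        exact min_le_right _ _
      have hlam : 0 < t * L / s0 := by positivity
      have sign2 : ∀ s ∈ Icc ε p, ph' t c s ≤ -(t * L / s0) := by
        intro s hs
        have hspos : 0 < s := lt_of_lt_of_le hεpos hs.1
        have hsle : s ≤ s0 - L := le_trans hs.2 hple
        rw [hps s hspos]
        have h1 : (s0 + L) / s0 ≤ s0 / s := by
          rw [div_le_div_iff₀ hs0pos hspos]
          nlinarith
        have h2 : s0 / s ≤ (s0 / s) ^ ((3:ℝ)/2) := by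
          have hge1 : (1:ℝ) ≤ s0 / s := by
            rw [le_div_iff₀ hspos]
            nlinarith
          calc s0 / s = (s0 / s) ^ (1:ℝ) := (Real.rpow_one _).symm
            _ ≤ _ := Real.rpow_le_rpow_of_exponent_le hge1 (by norm_num)
        have h3 : 1 + L / s0 ≤ (s0 / s) ^ ((3:ℝ)/2) := by
          have : (s0 + L) / s0 = 1 + L / s0 := by field_simp
          linarith [le_trans h1 h2]
        rw [mul_div_assoc]
        nlinarith [mul_le_mul_of_nonneg_left h3 tpos.le]
      have hvdc := vdc (ph t c) (ph' t c) (ph'' t c) ε p (t * L / s0) hεp hlam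
        (meas_ph t c)
        (fun s hs => hasDerivAt_ph t c (lt_of_lt_of_le hεpos hs.1))
        (fun s hs => hasDerivAt_ph' t c (lt_of_lt_of_le hεpos hs.1))
        (cont_ph'' t c ε p hεpos)
        (fun s hs => nonneg_ph'' t c hc (le_trans hεpos.le hs.1))
        (Or.inr sign2)
      refine hvdc.trans ?_
      have heq : 3 / (t * L / s0) = 3 * (s0 / (t * L)) := by
        field_simp
      rw [heq]
      have : s0 / (t * L) ≤ ε := by
        rw [div_le_iff₀ (by positivity)]
        nlinarith [factAD]
      linarith
  have bd3 : ‖∫ s in p..q, Complex.exp (I * (ph t c s : ℂ))‖ ≤ 2 * L := by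
    refine (trivbd p q hpq).trans ?_
    rcases le_or_gt a (max ε (s0 - L)) with hca | hca
    · have hp : p = a := by rw [hpdef, min_eq_left hca]
      have : q = p := le_antisymm (hp ▸ hqa) hpq
      rw [this]
      linarith
    · have hpmax : p = max ε (s0 - L) := by rw [hpdef, min_eq_right hca.le]
      have hpge : s0 - L ≤ p := hpmax ▸ le_max_right _ _
      have hq2 : q ≤ max p (s0 + L) := min_le_right _ _
      have : max p (s0 + L) ≤ p + 2 * L :=
        max_le (by linarith) (by linarith)
      linarith
  have bd4 : ‖∫ s in q..a, Complex.exp (I * (ph t c s : ℂ))‖ ≤ 6 * ε := by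
    rcases eq_or_lt_of_le hqa with heq | hlt
    · rw [heq, intervalIntegral.integral_same]
      simpa using by positivity
    · have hqmax : q = max p (s0 + L) := by
        have hmlt : max p (s0 + L) < a := by
          by_contra hcon
          push_neg at hcon
          have : q = a := by rw [hqdef, min_eq_left hcon]
          exact absurd this (ne_of_lt hlt)
        rw [hqdef, min_eq_right hmlt.le]
      have hqge : s0 + L ≤ q := hqmax ▸ le_max_right _ _
      have hs0L : 0 < s0 + L := by linarith
      have hlam : 0 < t * L / (s0 + L) := by positivity
      have sign4 : ∀ s ∈ Icc q a, t * L / (s0 + L) ≤ ph' t c s := by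
        intro s hs
        have hspos : 0 < s := lt_of_lt_of_le hqpos hs.1
        have hsge : s0 + L ≤ s := le_trans hqge hs.1
        rw [hps s hspos]
        have h2 : (s0 / s) ^ ((3:ℝ)/2) ≤ s0 / s := by
          rcases eq_or_lt_of_le hs0 with h0 | h0
          · rw [← h0]
            simp [Real.zero_rpow (by norm_num : ((3:ℝ)/2) ≠ 0)]
          · have hlt1 : s0 / s ≤ 1 := by
              rw [div_le_one hspos]; linarith
            calc (s0 / s) ^ ((3:ℝ)/2) ≤ (s0 / s) ^ (1:ℝ) :=
                Real.rpow_le_rpow_of_exponent_ge (div_pos h0 hspos) hlt1 (by norm_num)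
              _ = s0 / s := Real.rpow_one _
        have h1 : s0 / s ≤ s0 / (s0 + L) := by
          rw [div_le_div_iff₀ hspos hs0L]
          nlinarith
        have h3 : (s0 / s) ^ ((3:ℝ)/2) ≤ 1 - L / (s0 + L) := by
          have : s0 / (s0 + L) = 1 - L / (s0 + L) := by field_simp; ring
          linarith [le_trans h2 h1]
        rw [mul_div_assoc]
        nlinarith [mul_le_mul_of_nonneg_left h3 tpos.le]
      have hvdc := vdc (ph t c) (ph' t c) (ph'' t c) q a (t * L / (s0 + L)) hqa hlam
        (meas_ph t c)
        (fun s hs => hasDerivAt_ph t c (lt_of_lt_of_le hqpos hs.1))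
        (fun s hs => hasDerivAt_ph' t c (lt_of_lt_of_le hqpos hs.1))
        (cont_ph'' t c q a hqpos)
        (fun s hs => nonneg_ph'' t c hc (le_trans hqpos.le hs.1))
        (Or.inl sign4)
      refine hvdc.trans ?_
      have heq : 3 / (t * L / (s0 + L)) = 3 * (s0 / (t * L)) + 3 * (1 / t) := by
        field_simp
      rw [heq]
      have hA : s0 / (t * L) ≤ ε := by
        rw [div_le_iff₀ (by positivity)]
        nlinarith [factAD]
      have hB : 1 / t ≤ ε := by
        rw [hεdef, one_div, ← Real.rpow_neg_one t]
        exact Real.rpow_le_rpow_of_exponent_le ht (by norm_num)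
      linarith
  rw [split]
  have hLε : 2 * L = 2 * (1 + c) * ε := by rw [hLdef]; ring
  refine le_trans (norm_add_le _ _) (le_trans (add_le_add (le_trans (norm_add_le _ _)
    (add_le_add (le_trans (norm_add_le _ _) (add_le_add bd1 bd2)) bd3)) bd4) ?_)
  rw [hLε]
  nlinarith [hεpos]
lemma subset_thick {δ : ℝ} (hδ : 0 < δ) :
    Metric.closedBall (0:ℂ) (1 + δ/2) ⊆ Metric.thickening δ (Metric.closedBall (0:ℂ) 1) := by
  intro z hz
  rw [Metric.mem_closedBall, dist_zero_right] at hz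
  rw [Metric.mem_thickening_iff]
  rcases le_or_gt ‖z‖ 1 with h1 | h1
  · exact ⟨z, by simpa [Metric.mem_closedBall, dist_zero_right] using h1, by simpa using hδ⟩
  · have hzpos : 0 < ‖z‖ := by linarith
    refine ⟨(‖z‖⁻¹ : ℝ) • z, ?_, ?_⟩
    · simp [Metric.mem_closedBall, dist_zero_right, norm_smul, abs_of_pos (inv_pos.mpr hzpos),
        inv_mul_cancel₀ hzpos.ne']
    · have : z - (‖z‖⁻¹ : ℝ) • z = ((1 - ‖z‖⁻¹ : ℝ)) • z := by
        rw [sub_smul, one_smul]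
      rw [dist_eq_norm, this, norm_smul]
      have h2 : ‖z‖⁻¹ ≤ 1 := by
        rw [inv_le_one_iff₀]; right; linarith
      rw [Real.norm_eq_abs, _root_.abs_of_nonneg (by linarith : (0:ℝ) ≤ 1 - ‖z‖⁻¹)]
      have : (1 - ‖z‖⁻¹) * ‖z‖ = ‖z‖ - 1 := by
        rw [sub_mul, one_mul, inv_mul_cancel₀ hzpos.ne']
      rw [this]
      linarith

lemma exists_radius (F : ℂ → ℂ)
    (hF : ∃ U : Set ℂ, IsOpen U ∧ Metric.closedBall (0 : ℂ) 1 ⊆ U ∧ AnalyticOnNhd ℂ F U) :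
    ∃ R : NNReal, 1 < (R:ℝ) ∧ DifferentiableOn ℂ F (Metric.closedBall (0:ℂ) R) := by
  obtain ⟨U, hUo, hUb, hUa⟩ := hF
  obtain ⟨δ, hδ, hthick⟩ := (isCompact_closedBall (0:ℂ) 1).exists_thickening_subset_open hUo hUb
  refine ⟨(1 + δ/2 : ℝ).toNNReal, ?_, ?_⟩
  · rw [Real.coe_toNNReal _ (by linarith)]; linarith
  · rw [Real.coe_toNNReal _ (by linarith)]
    intro z hz
    exact ((hUa z (hthick (subset_thick hδ hz))).differentiableAt).differentiableWithinAt

/-- Synthesis of the stationary phase analysis of §5.7: for `F` analytic on a neighborhood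
of the closed unit disk and `d, a > 0`, the oscillatory integral
`∫₀^a F(e^{i d s^{-1/2}}) e^{ist} ds` decays like `t^{-5/6}` as `t → ∞`. -/
theorem stmt_13 (d a : ℝ) (hd : 0 < d) (ha : 0 < a) (F : ℂ → ℂ)
    (hF : ∃ U : Set ℂ, IsOpen U ∧ Metric.closedBall (0 : ℂ) 1 ⊆ U ∧ AnalyticOnNhd ℂ F U) :
    ∃ C : ℝ, 0 < C ∧ ∀ t : ℝ, 1 ≤ t →
      ‖(∫ s in (0 : ℝ)..a,
          F (Complex.exp (Complex.I * ((d * s ^ (-(1 : ℝ) / 2) : ℝ) : ℂ))) *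
            Complex.exp (Complex.I * ((s * t : ℝ) : ℂ)))‖ ≤ C * t ^ (-(5 : ℝ) / 6) := by
  obtain ⟨R, hR1, hRd⟩ := exists_radius F hF
  have hRpos : 0 < R := by
    have : (0:ℝ) < (R:ℝ) := by linarith
    exact_mod_cast this
  set P := cauchyPowerSeries F 0 R with hP
  have hball : HasFPowerSeriesOnBall F P 0 R := hRd.hasFPowerSeriesOnBall hRpos
  set cj : ℕ → ℂ := fun n => P n (fun _ => 1) with hcj
  have hcoef : ∀ (n : ℕ) (z : ℂ), (P n fun _ => z) = cj n * z ^ n := by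
    intro n z
    have h := (P n).map_smul_univ (fun _ : Fin n => z) (fun _ => (1:ℂ))
    simp only [smul_eq_mul, mul_one, Finset.prod_const, Finset.card_univ,
      Fintype.card_fin] at h
    rw [h]
    exact mul_comm _ _
  have hFsum : ∀ z : ℂ, ‖z‖ = 1 → HasSum (fun n => cj n * z ^ n) (F z) := by
    intro z hz
    have hmem : z ∈ Metric.eball (0:ℂ) R := by
      rw [mem_eball_zero_iff]
      have h1 : ‖z‖₊ = 1 := by
        ext; exact hz
      rw [enorm_eq_nnnorm, h1]
      exact_mod_cast (by exact_mod_cast hR1 : (1:NNReal) < R)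
    have h2 := hball.hasSum hmem
    rw [zero_add] at h2
    simpa only [hcoef] using h2
  set ρ : ℝ := (1 + (R:ℝ))/2 with hρ
  have hρ1 : 1 < ρ := by rw [hρ]; linarith
  have hρR : ρ < (R:ℝ) := by rw [hρ]; linarith
  have hρpos : (0:ℝ) ≤ ρ := by linarith
  have hsum0 : Summable fun n => ‖P n‖ * ρ^n := by
    have h1 : (ρ.toNNReal : ENNReal) < P.radius := by
      refine lt_of_lt_of_le ?_ hball.r_le
      rw [ENNReal.coe_lt_coe]
      have : ρ.toNNReal < R := by
        rw [← NNReal.coe_lt_coe, Real.coe_toNNReal _ hρpos]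
        exact hρR
      exact this
    have := P.summable_norm_mul_pow h1
    simpa [Real.coe_toNNReal _ hρpos] using this
  set M := ∑' n, ‖P n‖ * ρ^n with hMdef
  have hM : ∀ n, ‖P n‖ * ρ^n ≤ M :=
    fun n => Summable.le_tsum hsum0 n (fun m _ => by positivity)
  set x : ℝ := ρ⁻¹ with hxdef
  have hx0 : 0 < x := inv_pos.mpr (by linarith)
  have hx1 : x < 1 := by
    rw [hxdef, inv_lt_one_iff₀]; right; exact hρ1
  have hMpos : 0 ≤ M := tsum_nonneg (fun n => by positivity)
  have hcb : ∀ n, ‖cj n‖ ≤ M * x^n := by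
    intro n
    have h1 : ‖cj n‖ ≤ ‖P n‖ := by
      have h0 := (P n).le_opNorm (fun _ => (1:ℂ))
      simp only [norm_one, Finset.prod_const, one_pow, mul_one] at h0
      exact h0
    have hρn : (0:ℝ) < ρ^n := by positivity
    have h2 : ‖P n‖ ≤ M * x^n := by
      have h3 := hM n
      calc ‖P n‖ = (‖P n‖ * ρ^n) * (ρ^n)⁻¹ := by field_simp
        _ ≤ M * (ρ^n)⁻¹ := mul_le_mul_of_nonneg_right h3 (by positivity)
        _ = M * x^n := by rw [hxdef, inv_pow]
    exact h1.trans h2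
  set B : ℕ → ℝ := fun n => ‖cj n‖ * (12 * (1 + d * n)) with hB
  have hBnn : ∀ n, 0 ≤ B n := by
    intro n
    rw [hB]
    have : (0:ℝ) ≤ (n:ℝ) := Nat.cast_nonneg n
    positivity
  have hgsum : Summable (fun n : ℕ => 12*M*x^n + 12*M*d*((n:ℝ)*x^n)) := by
    refine Summable.add ((summable_geometric_of_lt_one hx0.le hx1).mul_left _) ?_
    have hs := summable_pow_mul_geometric_of_norm_lt_one 1
      (r := x) (by rwa [Real.norm_eq_abs, _root_.abs_of_pos hx0])
    have := hs.mul_left (12*M*d)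
    simpa [pow_one, mul_assoc] using this
  have hBsum : Summable B := by
    refine Summable.of_nonneg_of_le hBnn (fun n => ?_) hgsum
    have h1 := hcb n
    have hxn : (0:ℝ) ≤ x^n := by positivity
    have hn : (0:ℝ) ≤ (n:ℝ) := Nat.cast_nonneg n
    have h12 : (0:ℝ) ≤ 12 * (1 + d * n) := by positivity
    have h2 := mul_le_mul_of_nonneg_right h1 h12
    simp only [hB]
    nlinarith [h2]
  have hnormsum : Summable fun n => ‖cj n‖ := by
    refine Summable.of_nonneg_of_le (fun n => norm_nonneg _) ?_ hBsum
    intro n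
    simp only [hB]
    have hn : (0:ℝ) ≤ (n:ℝ) := Nat.cast_nonneg n
    have h12 : (0:ℝ) ≤ 12 * (1 + d * (n:ℝ)) - 1 := by nlinarith
    nlinarith [mul_nonneg (norm_nonneg (cj n)) h12]
  set Cs := ∑' n, B n with hCs
  have hCs0 : 0 ≤ Cs := tsum_nonneg hBnn
  refine ⟨Cs + 1, by linarith, ?_⟩
  intro t ht
  have tpos : (0:ℝ) < t := by linarith
  set ε := t ^ (-(5:ℝ)/6) with hε
  have hεpos : 0 < ε := Real.rpow_pos_of_pos tpos _
  set f : ℕ → ℝ → ℂ := fun n s => cj n * Complex.exp (I * (ph t (d*n) s : ℂ)) with hf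
  have hfm : ∀ n, Measurable (f n) := fun n => measurable_const.mul
    ((Complex.measurable_exp.comp (measurable_const.mul
      (Complex.measurable_ofReal.comp (meas_ph t (d*n))))))
  have hpt : ∀ s ∈ Ioc (0:ℝ) a,
      F (Complex.exp (I * ((d * s ^ (-(1:ℝ)/2) : ℝ) : ℂ))) * Complex.exp (I * ((s*t : ℝ) : ℂ))
      = ∑' n, f n s := by
    intro s _
    set z := Complex.exp (I * ((d * s ^ (-(1:ℝ)/2) : ℝ) : ℂ)) with hz
    have hz1 : ‖z‖ = 1 := nexp _
    have h1 := (hFsum z hz1).tsum_eq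
    have h2 : ∀ n : ℕ, f n s = (cj n * z^n) * Complex.exp (I * ((s*t:ℝ):ℂ)) := by
      intro n
      have hz' : z ^ n * Complex.exp (I * ((s*t:ℝ):ℂ))
          = Complex.exp (I * (ph t (d*n) s : ℂ)) := by
        rw [hz, ← Complex.exp_nat_mul, ← Complex.exp_add]
        congr 1
        unfold ph
        push_cast
        ring
      simp only [hf]
      rw [← hz']
      ring
    calc F z * Complex.exp (I * ((s*t:ℝ):ℂ))
        = (∑' n, cj n * z^n) * Complex.exp (I * ((s*t:ℝ):ℂ)) := by rw [h1]
      _ = ∑' n, (cj n * z^n * Complex.exp (I * ((s*t:ℝ):ℂ))) := tsum_mul_right.symm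
      _ = ∑' n, f n s := by
          congr 1
          funext n
          rw [h2 n]
  rw [intervalIntegral.integral_of_le ha.le,
    setIntegral_congr_fun measurableSet_Ioc hpt,
    MeasureTheory.integral_tsum (fun n => (hfm n).aestronglyMeasurable) ?cond]
  case cond =>
    have hnn : ∀ n, ∀ s : ℝ, (‖f n s‖₊ : ENNReal) = (‖cj n‖₊ : ENNReal) := by
      intro n s
      rw [hf]
      simp only [nnnorm_mul]
      have : ‖Complex.exp (I * (ph t (d*n) s : ℂ))‖₊ = 1 := by
        ext
        exact nexp _
      rw [this, mul_one]
    have heq : ∀ n : ℕ, (∫⁻ s, ‖f n s‖₊ ∂(volume.restrict (Ioc (0:ℝ) a)))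
        = (‖cj n‖₊ : ENNReal) * volume (Ioc (0:ℝ) a) := by
      intro n
      rw [lintegral_congr (fun s => hnn n s), lintegral_const,
        Measure.restrict_apply_univ]
    simp only [enorm_eq_nnnorm]
    rw [funext heq]
    rw [ENNReal.tsum_mul_right]
    refine ENNReal.mul_ne_top ?_ ?_
    · exact ENNReal.tsum_coe_ne_top_iff_summable.mpr
        (NNReal.summable_coe.mp (by simpa using hnormsum))
    · rw [Real.volume_Ioc]
      exact ENNReal.ofReal_ne_top
  have hI : ∀ n : ℕ, (∫ s in Ioc (0:ℝ) a, f n s)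
      = cj n * ∫ s in (0:ℝ)..a, Complex.exp (I * (ph t (d*n) s : ℂ)) := by
    intro n
    simp only [hf]
    rw [MeasureTheory.integral_const_mul, intervalIntegral.integral_of_le ha.le]
  have hterm : ∀ n : ℕ, ‖∫ s in Ioc (0:ℝ) a, f n s‖ ≤ B n * ε := by
    intro n
    rw [hI n, norm_mul]
    have hdn : (0:ℝ) ≤ d * n := by positivity
    have hcore := core a (d*n) ha hdn t ht
    calc ‖cj n‖ * ‖∫ s in (0:ℝ)..a, Complex.exp (I * (ph t (d*n) s : ℂ))‖
        ≤ ‖cj n‖ * (12 * (1 + d*n) * ε) :=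
          mul_le_mul_of_nonneg_left hcore (norm_nonneg _)
      _ = B n * ε := by simp only [hB]; ring
  have hsumI : Summable fun n : ℕ => ‖∫ s in Ioc (0:ℝ) a, f n s‖ :=
    Summable.of_nonneg_of_le (fun n => norm_nonneg _) hterm (hBsum.mul_right ε)
  calc ‖∑' n : ℕ, ∫ s in Ioc (0:ℝ) a, f n s‖
      ≤ ∑' n : ℕ, ‖∫ s in Ioc (0:ℝ) a, f n s‖ := norm_tsum_le_tsum_norm hsumI
    _ ≤ ∑' n : ℕ, B n * ε := Summable.tsum_le_tsum hterm hsumI (hBsum.mul_right ε)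
    _ = Cs * ε := by rw [tsum_mul_right]
    _ ≤ (Cs + 1) * ε := by nlinarith [hεpos]
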